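/- arXiv:1010.2286 — 2 statements merged into one kernel-verified Lean document; each statement's English description precedes it below -/
import Mathlib

section
/- Let W be uniformly distributed on [N] with N ≥ 2, and let Z^T = (Z_1,…,Z_T) be generated by interconnecting a randomly chosen system θ_W with a controller, with Z_t = (Y_t, U_t), where for each t, W → (Y_t, Z^{t−1}) → U_t is a Markov chain. Then for any sequence of Markov kernels Q_{Y_t|Z^{t−1}} dominating the conditional laws P_{Y_t|Z^{t−1}}, the bound (log N)·min_{i∈[N]} P(θ̂_T = θ_i | W = i) ≤ Σ_{t=1}^T D(P_{Y_t|Z^{t−1},W} ∥ Q_{Y_t|Z^{t−1}} | P_{U_t,Z^{t−1},W}) + log 2 holds for any measurable estimator θ̂_T of θ_W taking values in {θ_1,…,θ_N}. -/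
open Finset

variable {Y U : Type*} [Fintype Y] [Fintype U]

/-- A (time-varying) stochastic system over finite alphabets: for each time `t`,
a conditional pmf on the next output given the input/output history `(y^t, u^t)`. -/
def SysKer (Y U : Type*) : Type _ := ∀ t : ℕ, (Fin t → Y × U) → Y → ℝ

/-- A randomized controller: a conditional pmf on the next input given the history
and the current output. -/
def CtrlKer (Y U : Type*) : Type _ := ∀ t : ℕ, (Fin t → Y × U) → Y → U → ℝ

/-- Validity of a system kernel as a family of pmfs. -/
def IsPmfSys [Fintype Y] (P : SysKer Y U) : Prop :=
  ∀ t h, (∀ y, 0 ≤ P t h y) ∧ ∑ y, P t h y = 1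

/-- Validity of a controller kernel as a family of pmfs. -/
def IsPmfCtrl [Fintype U] (Q : CtrlKer Y U) : Prop :=
  ∀ t h y, (∀ u, 0 ≤ Q t h y u) ∧ ∑ u, Q t h y u = 1

/-- The probability of a length-`T` trajectory `h` under the interconnection of the
system `P` with the controller `Q`. -/
def trajProb (P : SysKer Y U) (Q : CtrlKer Y U) (T : ℕ) (h : Fin T → Y × U) : ℝ :=
  ∏ t : Fin T,
    P t.1 (fun i : Fin t.1 => h ⟨i.1, i.2.trans t.2⟩) (h t).1 *
      Q t.1 (fun i : Fin t.1 => h ⟨i.1, i.2.trans t.2⟩) (h t).1 (h t).2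

/-- Kullback–Leibler divergence between two pmfs on a finite alphabet. -/
noncomputable def klFin [Fintype Y] (p q : Y → ℝ) : ℝ :=
  ∑ y, p y * Real.log (p y / q y)

/-- The snoc equivalence for tuples. -/
def snocE (A : Type*) (T : ℕ) : ((Fin T → A) × A) ≃ (Fin (T + 1) → A) where
  toFun p := Fin.snoc p.1 p.2
  invFun h := (Fin.init h, h (Fin.last T))
  left_inv p := by
    ext i
    · simp [Fin.init_snoc]
    · simp
  right_inv h := Fin.snoc_init_self h

lemma sum_snoc {A : Type*} [Fintype A] (T : ℕ) (f : (Fin (T + 1) → A) → ℝ) :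
    ∑ h : Fin (T + 1) → A, f h = ∑ h : Fin T → A, ∑ z : A, f (Fin.snoc h z) := by
  rw [← Equiv.sum_comp (snocE A T) f, Fintype.sum_prod_type]
  rfl

lemma trajProb_snoc (P : SysKer Y U) (Q : CtrlKer Y U) (T : ℕ) (h : Fin T → Y × U) (z : Y × U) :
    trajProb P Q (T + 1) (Fin.snoc h z) =
      trajProb P Q T h * (P T h z.1 * Q T h z.1 z.2) := by
  unfold trajProb
  rw [Fin.prod_univ_castSucc]
  congr 1
  · refine Finset.prod_congr rfl fun t _ => ?_
    have h1 : (Fin.snoc h z : Fin (T + 1) → Y × U) t.castSucc = h t := by simp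
    have h2 : ∀ (i : Fin t.1) (pf : i.1 < T + 1),
        (Fin.snoc h z : Fin (T + 1) → Y × U) ⟨i.1, pf⟩ = h ⟨i.1, i.2.trans t.2⟩ := by
      intro i pf
      have e : (⟨i.1, pf⟩ : Fin (T + 1)) = Fin.castSucc ⟨i.1, i.2.trans t.2⟩ := rfl
      rw [e, Fin.snoc_castSucc]
    exact congr_arg₂ (fun (g : Fin t.1 → Y × U) (w : Y × U) =>
        P t.1 g w.1 * Q t.1 g w.1 w.2)
      (funext fun i => h2 i _) h1
  · have h1 : (Fin.snoc h z : Fin (T + 1) → Y × U) (Fin.last T) = z := by simp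
    have h2 : ∀ (i : Fin T) (pf : i.1 < T + 1),
        (Fin.snoc h z : Fin (T + 1) → Y × U) ⟨i.1, pf⟩ = h i := by
      intro i pf
      have e : (⟨i.1, pf⟩ : Fin (T + 1)) = Fin.castSucc i := rfl
      rw [e, Fin.snoc_castSucc]
    exact congr_arg₂ (fun (g : Fin T → Y × U) (w : Y × U) =>
        P T g w.1 * Q T g w.1 w.2)
      (funext fun i => h2 i _) h1

lemma trajProb_nonneg {P : SysKer Y U} {Q : CtrlKer Y U} (hP : IsPmfSys P) (hQ : IsPmfCtrl Q)
    (T : ℕ) (h : Fin T → Y × U) : 0 ≤ trajProb P Q T h :=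
  Finset.prod_nonneg fun t _ => mul_nonneg ((hP _ _).1 _) ((hQ _ _ _).1 _)

lemma sum_step {P : SysKer Y U} {Q : CtrlKer Y U} (hP : IsPmfSys P) (hQ : IsPmfCtrl Q)
    (T : ℕ) (h : Fin T → Y × U) : ∑ z : Y × U, P T h z.1 * Q T h z.1 z.2 = 1 := by
  rw [Fintype.sum_prod_type]
  simp only [← Finset.mul_sum]
  rw [Finset.sum_congr rfl fun y _ => by rw [(hQ T h y).2, mul_one]]
  exact (hP T h).2

lemma sum_trajProb {P : SysKer Y U} {Q : CtrlKer Y U} (hP : IsPmfSys P) (hQ : IsPmfCtrl Q) :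
    ∀ T : ℕ, ∑ h : Fin T → Y × U, trajProb P Q T h = 1 := by
  intro T
  induction T with
  | zero =>
    have h1 : ∀ h : Fin 0 → Y × U, trajProb P Q 0 h = 1 := fun h => by
      simp [trajProb]
    simp [h1]
  | succ T ih =>
    rw [sum_snoc]
    calc ∑ h : Fin T → Y × U, ∑ z : Y × U, trajProb P Q (T+1) (Fin.snoc h z)
        = ∑ h : Fin T → Y × U, trajProb P Q T h := by
          apply Finset.sum_congr rfl
          intro h _
          simp only [trajProb_snoc, ← Finset.mul_sum, sum_step hP hQ, mul_one]
      _ = 1 := ih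

lemma trajProb_dom {P : SysKer Y U} {γ : CtrlKer Y U} {Qs : SysKer Y U}
    (hdom : ∀ t h y, Qs t h y = 0 → P t h y = 0) (T : ℕ) (h : Fin T → Y × U)
    (hne : trajProb P γ T h ≠ 0) : trajProb Qs γ T h ≠ 0 := by
  unfold trajProb at *
  rw [Finset.prod_ne_zero_iff] at hne ⊢
  intro t ht
  obtain ⟨hP, hγ⟩ := mul_ne_zero_iff.1 (hne t ht)
  exact mul_ne_zero (fun h0 => hP (hdom _ _ _ h0)) hγ

/-- The log-sum inequality on a finite set. -/
lemma logSum {Ω : Type*} (s : Finset Ω) (p q : Ω → ℝ)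
    (hp : ∀ x ∈ s, 0 ≤ p x) (hq : ∀ x ∈ s, 0 ≤ q x)
    (hd : ∀ x ∈ s, q x = 0 → p x = 0) :
    (∑ x ∈ s, p x) * Real.log ((∑ x ∈ s, p x) / (∑ x ∈ s, q x))
      ≤ ∑ x ∈ s, p x * Real.log (p x / q x) := by
  set pS := ∑ x ∈ s, p x with hpS
  set qS := ∑ x ∈ s, q x with hqS
  rcases eq_or_lt_of_le (Finset.sum_nonneg hq) with hq0 | hq0
  · -- all q vanish, hence all p vanish
    have hqz : ∀ x ∈ s, q x = 0 := by
      intro x hx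
      exact (Finset.sum_eq_zero_iff_of_nonneg hq).1 hq0.symm x hx
    have hpz : ∀ x ∈ s, p x = 0 := fun x hx => hd x hx (hqz x hx)
    have : pS = 0 := Finset.sum_eq_zero hpz
    rw [this, zero_mul]
    exact Finset.sum_nonneg fun x hx => by rw [hpz x hx]; simp
  · -- Jensen with φ(x) = x log x, weights q x / qS, points p x / q x
    have hqS' : qS ≠ 0 := ne_of_gt hq0
    have key := Real.convexOn_mul_log.map_sum_le (t := s)
      (w := fun x => q x / qS) (p := fun x => p x / q x)
      (fun x hx => div_nonneg (hq x hx) hq0.le)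
      (by rw [← Finset.sum_div, div_self hqS'])
      (fun x hx => Set.mem_Ici.2 (div_nonneg (hp x hx) (hq x hx)))
    have e1 : ∑ x ∈ s, (q x / qS) • (p x / q x) = pS / qS := by
      rw [hpS, Finset.sum_div]
      refine Finset.sum_congr rfl fun x hx => ?_
      rcases eq_or_ne (q x) 0 with h0 | h0
      · rw [h0, hd x hx h0]; simp
      · rw [smul_eq_mul]
        field_simp
    have e2 : ∑ x ∈ s, (q x / qS) • ((p x / q x) * Real.log (p x / q x))
        = (∑ x ∈ s, p x * Real.log (p x / q x)) / qS := by
      rw [Finset.sum_div]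
      refine Finset.sum_congr rfl fun x hx => ?_
      rcases eq_or_ne (q x) 0 with h0 | h0
      · rw [h0, hd x hx h0]; simp
      · rw [smul_eq_mul]
        field_simp
    rw [e1, e2] at key
    have := mul_le_mul_of_nonneg_left key hq0.le
    rw [← hqS] at this
    have hA : qS * (pS / qS * Real.log (pS / qS)) = pS * Real.log (pS / qS) := by
      field_simp
    have hB : qS * ((∑ x ∈ s, p x * Real.log (p x / q x)) / qS)
        = ∑ x ∈ s, p x * Real.log (p x / q x) := by
      field_simp
    rw [hA, hB] at this
    exact this

lemma chain_rule {P : SysKer Y U} {γ : CtrlKer Y U} {Qs : SysKer Y U}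
    (hP : IsPmfSys P) (hγ : IsPmfCtrl γ)
    (hdom : ∀ t h y, Qs t h y = 0 → P t h y = 0) (T : ℕ) :
    ∑ t ∈ Finset.range T, ∑ h : Fin t → Y × U,
        trajProb P γ t h * klFin (P t h) (Qs t h)
      = klFin (trajProb P γ T) (trajProb Qs γ T) := by
  induction T with
  | zero => simp [klFin, trajProb]
  | succ T ih =>
    rw [Finset.sum_range_succ, ih]
    have main : ∀ h : Fin T → Y × U,
        ∑ z : Y × U, trajProb P γ (T+1) (Fin.snoc h z) *
            Real.log (trajProb P γ (T+1) (Fin.snoc h z) /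
              trajProb Qs γ (T+1) (Fin.snoc h z))
          = trajProb P γ T h *
              Real.log (trajProb P γ T h / trajProb Qs γ T h)
            + trajProb P γ T h * klFin (P T h) (Qs T h) := by
      intro h
      rcases eq_or_ne (trajProb P γ T h) 0 with h0 | h0
      · simp [trajProb_snoc, h0]
      · have hqf0 : trajProb Qs γ T h ≠ 0 := trajProb_dom hdom T h h0
        have split : ∀ z : Y × U,
            trajProb P γ (T+1) (Fin.snoc h z) *
              Real.log (trajProb P γ (T+1) (Fin.snoc h z) /
                trajProb Qs γ (T+1) (Fin.snoc h z))
            = trajProb P γ T h * (P T h z.1 * γ T h z.1 z.2) *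
                Real.log (trajProb P γ T h / trajProb Qs γ T h)
              + trajProb P γ T h *
                  (γ T h z.1 z.2 * (P T h z.1 * Real.log (P T h z.1 / Qs T h z.1))) := by
          intro z
          rw [trajProb_snoc, trajProb_snoc]
          rcases eq_or_ne (P T h z.1) 0 with hA | hA
          · simp [hA]
          rcases eq_or_ne (γ T h z.1 z.2) 0 with hG | hG
          · simp [hG]
          have hB : Qs T h z.1 ≠ 0 := fun hz => hA (hdom T h z.1 hz)
          rw [Real.log_div (mul_ne_zero h0 (mul_ne_zero hA hG))
                (mul_ne_zero hqf0 (mul_ne_zero hB hG)),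
              Real.log_mul h0 (mul_ne_zero hA hG),
              Real.log_mul hqf0 (mul_ne_zero hB hG),
              Real.log_mul hA hG, Real.log_mul hB hG,
              Real.log_div h0 hqf0, Real.log_div hA hB]
          ring
        rw [Finset.sum_congr rfl fun z _ => split z, Finset.sum_add_distrib]
        congr 1
        · rw [← Finset.sum_mul, ← Finset.mul_sum, sum_step hP hγ, mul_one]
        · rw [← Finset.mul_sum]
          congr 1
          rw [Fintype.sum_prod_type]
          show ∑ y : Y, ∑ u : U, γ T h y u * (P T h y * Real.log (P T h y / Qs T h y))
              = klFin (P T h) (Qs T h)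
          rw [Finset.sum_congr rfl fun y _ => by
            rw [← Finset.sum_mul, (hγ T h y).2, one_mul]]
          rfl
    show _ = ∑ g : Fin (T+1) → Y × U, trajProb P γ (T+1) g *
        Real.log (trajProb P γ (T+1) g / trajProb Qs γ (T+1) g)
    rw [sum_snoc, Finset.sum_congr rfl fun h _ => main h, Finset.sum_add_distrib]
    rfl

set_option maxHeartbeats 1000000

/-- **the Meta-Theorem.** Let `W` be uniform on `Fin N`, let the trajectory
`Z^T` be generated by interconnecting the randomly chosen system `θ_W` with the controller
`γ`. For any sequence of dominating auxiliary kernels `Qk` and any estimator `est` of `W`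
from the trajectory,
`(log N) · min_i P(est = i | W = i) ≤ Σ_{t<T} D(P_{Y_t|Z^{t-1},W} ‖ Qk_t | P) + log 2`. -/
theorem meta_theorem {Y U : Type*} [Fintype Y] [Fintype U]
    [DecidableEq Y] [DecidableEq U]
    (N T : ℕ) (hN : 2 ≤ N)
    (θ : Fin N → SysKer Y U) (hθ : ∀ i, IsPmfSys (θ i))
    (γ : CtrlKer Y U) (hγ : IsPmfCtrl γ)
    (Qk : ∀ t : ℕ, (Fin t → Y × U) → Y → ℝ)
    (hQk : ∀ t h, (∀ y, 0 ≤ Qk t h y) ∧ ∑ y, Qk t h y = 1)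
    (hdom : ∀ t (h : Fin t → Y × U) y, Qk t h y = 0 → ∀ i, θ i t h y = 0)
    (est : (Fin T → Y × U) → Fin N) :
    Real.log N *
        (⨅ i : Fin N, ∑ h ∈ Finset.univ.filter (fun h : Fin T → Y × U => est h = i),
          trajProb (θ i) γ T h)
      ≤ (∑ t ∈ Finset.range T, ∑ i : Fin N, (1 / (N : ℝ)) *
          ∑ h : Fin t → Y × U,
            trajProb (θ i) γ t h * klFin (θ i t h) (Qk t h))
        + Real.log 2 := by
  classical
  have hN0 : (0 : ℝ) < N := by
    have : 0 < N := by omega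
    exact_mod_cast this
  have hN0' : (N : ℝ) ≠ 0 := ne_of_gt hN0
  have hNinv : (0 : ℝ) < 1 / N := by positivity
  have hQs : IsPmfSys (Qk : SysKer Y U) := hQk
  set Pt : Fin N → (Fin T → Y × U) → ℝ := fun i => trajProb (θ i) γ T with hPtdef
  set Qt : (Fin T → Y × U) → ℝ := trajProb (Qk : SysKer Y U) γ T with hQtdef
  have hPt_nn : ∀ i h, 0 ≤ Pt i h := fun i h => trajProb_nonneg (hθ i) hγ T h
  have hQt_nn : ∀ h, 0 ≤ Qt h := fun h => trajProb_nonneg hQs hγ T h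
  have hPt_sum : ∀ i, ∑ h, Pt i h = 1 := fun i => sum_trajProb (hθ i) hγ T
  have hQt_sum : ∑ h, Qt h = 1 := sum_trajProb hQs hγ T
  have domT : ∀ i h, Qt h = 0 → Pt i h = 0 := by
    intro i h h0
    by_contra hne
    exact trajProb_dom (fun t hh y hz => hdom t hh y hz i) T h hne h0
  -- the per-hypothesis success probabilities
  set p : Fin N → ℝ := fun i =>
    ∑ h ∈ Finset.univ.filter (fun h : Fin T → Y × U => est h = i), Pt i h with hpdef
  -- joint distributions on Fin N × (Fin T → Y × U)
  set pJ : Fin N × (Fin T → Y × U) → ℝ := fun x => (1 / N) * Pt x.1 x.2 with hpJdef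
  set qJ : Fin N × (Fin T → Y × U) → ℝ := fun x => (1 / N) * Qt x.2 with hqJdef
  have hpJ_nn : ∀ x, 0 ≤ pJ x := fun x => mul_nonneg hNinv.le (hPt_nn _ _)
  have hqJ_nn : ∀ x, 0 ≤ qJ x := fun x => mul_nonneg hNinv.le (hQt_nn _)
  have hdomJ : ∀ x, qJ x = 0 → pJ x = 0 := by
    intro x h0
    have : Qt x.2 = 0 := by
      rcases mul_eq_zero.1 h0 with h | h
      · exact absurd h (ne_of_gt hNinv)
      · exact h
    simp [hpJdef, domT x.1 x.2 this]
  set Apred : Fin N × (Fin T → Y × U) → Prop := fun x => est x.2 = x.1 with hApred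
  set SA : ℝ := ∑ x ∈ Finset.univ.filter Apred, pJ x with hSA
  set SAc : ℝ := ∑ x ∈ Finset.univ.filter (fun x => ¬ Apred x), pJ x with hSAc
  set RA : ℝ := ∑ x ∈ Finset.univ.filter Apred, qJ x with hRA
  set RAc : ℝ := ∑ x ∈ Finset.univ.filter (fun x => ¬ Apred x), qJ x with hRAc
  -- totals
  have hpJ_tot : ∑ x : Fin N × (Fin T → Y × U), pJ x = 1 := by
    rw [Fintype.sum_prod_type]
    simp only [hpJdef]
    rw [Finset.sum_congr rfl fun i _ => by
      rw [← Finset.mul_sum, hPt_sum i, mul_one]]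
    rw [Finset.sum_const, Finset.card_univ, Fintype.card_fin, nsmul_eq_mul]
    field_simp
  have hqJ_tot : ∑ x : Fin N × (Fin T → Y × U), qJ x = 1 := by
    rw [Fintype.sum_prod_type]
    simp only [hqJdef]
    rw [Finset.sum_congr rfl fun i _ => by
      rw [← Finset.mul_sum, hQt_sum, mul_one]]
    rw [Finset.sum_const, Finset.card_univ, Fintype.card_fin, nsmul_eq_mul]
    field_simp
  have hSA_SAc : SA + SAc = 1 := by
    rw [hSA, hSAc, Finset.sum_filter_add_sum_filter_not, hpJ_tot]
  have hRA_val : RA = 1 / N := by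
    rw [hRA]
    rw [Finset.sum_filter]
    rw [Fintype.sum_prod_type_right]
    rw [Finset.sum_congr rfl fun h _ => Finset.sum_ite_eq Finset.univ (est h)
      (fun _ => qJ (est h, h))]
    simp only [Finset.mem_univ, if_true]
    rw [hqJdef]
    simp only
    rw [← Finset.mul_sum, hQt_sum, mul_one]
  have hRA_RAc : RA + RAc = 1 := by
    rw [hRA, hRAc, Finset.sum_filter_add_sum_filter_not, hqJ_tot]
  have hRAc_val : RAc = 1 - 1 / N := by
    have := hRA_RAc
    rw [hRA_val] at this
    linarith
  -- success probability identities
  have hSA_p : SA = (1 / N) * ∑ i, p i := by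
    rw [hSA, Finset.sum_filter, Fintype.sum_prod_type, Finset.mul_sum]
    refine Finset.sum_congr rfl fun i _ => ?_
    rw [hpdef]
    simp only
    rw [Finset.mul_sum, Finset.sum_filter]
  have hSA_nn : 0 ≤ SA := Finset.sum_nonneg fun x _ => hpJ_nn x
  have hSAc_nn : 0 ≤ SAc := Finset.sum_nonneg fun x _ => hpJ_nn x
  have hSA_le1 : SA ≤ 1 := by linarith
  -- the joint KL decomposition
  have hKL : ∑ x : Fin N × (Fin T → Y × U), pJ x * Real.log (pJ x / qJ x)
      = ∑ i, (1 / N) * klFin (Pt i) Qt := by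
    rw [Fintype.sum_prod_type]
    refine Finset.sum_congr rfl fun i _ => ?_
    show ∑ h : Fin T → Y × U,
        (1 / (N : ℝ)) * Pt i h * Real.log ((1 / (N : ℝ)) * Pt i h / ((1 / (N : ℝ)) * Qt h))
        = 1 / (N : ℝ) * ∑ h, Pt i h * Real.log (Pt i h / Qt h)
    rw [Finset.mul_sum]
    refine Finset.sum_congr rfl fun h _ => ?_
    rw [mul_div_mul_left _ _ (ne_of_gt hNinv)]
    ring
  -- log-sum inequality on the two cells
  have hlogsumA := logSum (Finset.univ.filter Apred) pJ qJ
    (fun x _ => hpJ_nn x) (fun x _ => hqJ_nn x) (fun x _ => hdomJ x)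
  have hlogsumAc := logSum (Finset.univ.filter (fun x => ¬ Apred x)) pJ qJ
    (fun x _ => hpJ_nn x) (fun x _ => hqJ_nn x) (fun x _ => hdomJ x)
  have hsplit : ∑ x ∈ Finset.univ.filter Apred, pJ x * Real.log (pJ x / qJ x)
      + ∑ x ∈ Finset.univ.filter (fun x => ¬ Apred x), pJ x * Real.log (pJ x / qJ x)
      = ∑ x : Fin N × (Fin T → Y × U), pJ x * Real.log (pJ x / qJ x) :=
    Finset.sum_filter_add_sum_filter_not _ _ _
  have hbound : SA * Real.log (SA / RA) + SAc * Real.log (SAc / RAc)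
      ≤ ∑ x : Fin N × (Fin T → Y × U), pJ x * Real.log (pJ x / qJ x) := by
    rw [← hsplit]
    exact add_le_add hlogsumA hlogsumAc
  -- lower bound the two-point divergence
  have hterm1 : SA * Real.log SA + SA * Real.log N ≤ SA * Real.log (SA / RA) := by
    rw [hRA_val]
    rcases eq_or_lt_of_le hSA_nn with h0 | h0
    · rw [← h0]; simp
    · have he : SA / (1 / (N : ℝ)) = SA * N := by field_simp
      rw [he, Real.log_mul (ne_of_gt h0) hN0']
      ring_nf
      exact le_refl _
  have hterm2 : SAc * Real.log SAc ≤ SAc * Real.log (SAc / RAc) := by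
    have hc : (0 : ℝ) < 1 - 1 / N := by
      have : (1 : ℝ) / N ≤ 1 / 2 := by
        apply one_div_le_one_div_of_le
        · norm_num
        · exact_mod_cast hN
      linarith
    rw [hRAc_val]
    rcases eq_or_lt_of_le hSAc_nn with h0 | h0
    · rw [← h0]; simp
    · rw [Real.log_div (ne_of_gt h0) (ne_of_gt hc)]
      have : Real.log (1 - 1 / N) ≤ 0 := Real.log_nonpos hc.le (by linarith [hNinv])
      nlinarith
  have hbinent : -Real.log 2 ≤ SA * Real.log SA + SAc * Real.log SAc := by
    have hc : SAc = 1 - SA := by linarith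
    have := Real.binEntropy_le_log_two (p := SA)
    rw [Real.binEntropy, Real.log_inv, Real.log_inv] at this
    rw [hc]
    linarith [this]
  -- put the divergence bound together
  have hfano : SA * Real.log N - Real.log 2
      ≤ ∑ x : Fin N × (Fin T → Y × U), pJ x * Real.log (pJ x / qJ x) := by
    have := add_le_add hterm1 hterm2
    linarith [hbound, hbinent]
  -- the infimum is at most the average
  have hinf_le : (⨅ i : Fin N, p i) ≤ (1 / N) * ∑ i, p i := by
    have hbdd : BddBelow (Set.range p) := (Set.finite_range p).bddBelow
    have hle : ∀ i, (⨅ i : Fin N, p i) ≤ p i := fun i => ciInf_le hbdd i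
    have hsum : (N : ℝ) * (⨅ i : Fin N, p i) ≤ ∑ i, p i := by
      calc (N : ℝ) * (⨅ i : Fin N, p i)
          = ∑ _i : Fin N, (⨅ i : Fin N, p i) := by
            rw [Finset.sum_const, Finset.card_univ, Fintype.card_fin, nsmul_eq_mul]
        _ ≤ ∑ i, p i := Finset.sum_le_sum fun i _ => hle i
    calc (⨅ i : Fin N, p i) = (1 / N) * ((N : ℝ) * (⨅ i : Fin N, p i)) := by
          field_simp
      _ ≤ (1 / N) * ∑ i, p i := by
          exact mul_le_mul_of_nonneg_left hsum hNinv.le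
  have hlogN : 0 ≤ Real.log N := Real.log_nonneg (by exact_mod_cast Nat.one_le_of_lt hN)
  -- rewrite the RHS using the chain rule
  have hRHS : ∑ t ∈ Finset.range T, ∑ i : Fin N, (1 / (N : ℝ)) *
        ∑ h : Fin t → Y × U, trajProb (θ i) γ t h * klFin (θ i t h) (Qk t h)
      = ∑ i, (1 / N) * klFin (Pt i) Qt := by
    rw [Finset.sum_comm]
    refine Finset.sum_congr rfl fun i _ => ?_
    rw [← Finset.mul_sum]
    congr 1
    exact chain_rule (hθ i) hγ (fun t hh y hz => hdom t hh y hz i) T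
  rw [hRHS]
  calc Real.log N * (⨅ i : Fin N, p i)
      ≤ Real.log N * ((1 / N) * ∑ i, p i) := mul_le_mul_of_nonneg_left hinf_le hlogN
    _ = SA * Real.log N := by rw [hSA_p]; ring
    _ ≤ (∑ x : Fin N × (Fin T → Y × U), pJ x * Real.log (pJ x / qJ x)) + Real.log 2 := by
        linarith [hfano]
    _ = (∑ i, (1 / N) * klFin (Pt i) Qt) + Real.log 2 := by rw [hKL]
end

section
/- Let Y_{t+1} = A Y_t + U_t + V_{t+1} with U_t = −F_t Y_t where F_t ∈ ℝ^{n×n} may depend measurably on the past. Define G_T = Σ_{t=1}^T Y_t Y_tᵀ and, when G_T is invertible, the least-squares estimate Ã_T = (Σ_{t=1}^T F_t Y_t Y_tᵀ) G_T^{−1}. On the event {G_T/T ⪰ c·I}, one has the deterministic inequality ‖Ã_T − A‖² ≤ (1/(cT)) Σ_{t=1}^T ‖Y_{t+1} − V_{t+1}‖², where ‖·‖ on matrices is the operator norm. -/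
open Matrix Finset

/-- The operator (spectral) norm of a square real matrix. -/
noncomputable def opNorm {n : ℕ} (A : Matrix (Fin n) (Fin n) ℝ) : ℝ :=
  ‖(Matrix.toEuclideanCLM (𝕜 := ℝ) A : EuclideanSpace ℝ (Fin n) →L[ℝ] EuclideanSpace ℝ (Fin n))‖

section Aux

variable {n : ℕ}

lemma aux_mul_vecMulVec (M : Matrix (Fin n) (Fin n) ℝ) (u v : Fin n → ℝ) :
    M * vecMulVec u v = vecMulVec (M.mulVec u) v := by
  ext i j
  simp only [Matrix.mul_apply, vecMulVec_apply, Matrix.mulVec, dotProduct,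
    Finset.sum_mul]
  exact Finset.sum_congr rfl fun k _ => by ring

lemma aux_vecMulVec_mulVec (u v z : Fin n → ℝ) :
    (vecMulVec u v).mulVec z = (v ⬝ᵥ z) • u := by
  funext i
  simp only [Matrix.mulVec, dotProduct, vecMulVec_apply, Pi.smul_apply, smul_eq_mul,
    Finset.sum_mul]
  exact Finset.sum_congr rfl fun k _ => by ring

lemma aux_dotProduct_sum {ι : Type*} (s : Finset ι) (v : Fin n → ℝ) (f : ι → Fin n → ℝ) :
    v ⬝ᵥ (∑ t ∈ s, f t) = ∑ t ∈ s, v ⬝ᵥ f t := by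
  simp only [dotProduct, Finset.sum_apply, Finset.mul_sum]
  exact Finset.sum_comm

lemma aux_vecMulVec_sub (u w v : Fin n → ℝ) :
    vecMulVec (u - w) v = vecMulVec u v - vecMulVec w v := by
  ext i j
  simp [vecMulVec_apply, sub_mul]

lemma aux_sum_mulVec {ι : Type*} (s : Finset ι) (M : ι → Matrix (Fin n) (Fin n) ℝ)
    (v : Fin n → ℝ) : (∑ t ∈ s, M t) *ᵥ v = ∑ t ∈ s, (M t *ᵥ v) := by
  funext i
  simp only [Matrix.mulVec, dotProduct, Finset.sum_apply, Matrix.sum_apply,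
    Finset.sum_mul]
  exact Finset.sum_comm

lemma aux_opNorm_neg (M : Matrix (Fin n) (Fin n) ℝ) : opNorm (-M) = opNorm M := by
  unfold opNorm
  rw [map_neg, norm_neg]

lemma aux_euclid_norm_symm (w : Fin n → ℝ) :
    ‖(WithLp.equiv 2 (Fin n → ℝ)).symm w‖ = Real.sqrt (∑ i, w i ^ 2) := by
  rw [EuclideanSpace.norm_eq]
  congr 1
  exact Finset.sum_congr rfl fun i _ => by
    rw [Real.norm_eq_abs, sq_abs]; rfl

end Aux

/-- **Lemma A.1.** For the closed-loop system `Y_{t+1} = A Y_t + U_t + V_{t+1}`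
with feedback `U_t = −F_t Y_t`, on the event `{G_T/T ⪰ cI}` the least-squares estimate
`Ã_T = (Σ_t F_t Y_t Y_tᵀ) G_T⁻¹` satisfies
`‖Ã_T − A‖² ≤ (1/(cT)) Σ_t ‖Y_{t+1} − V_{t+1}‖²`. -/
theorem least_squares_identification_bound
    (n T : ℕ) (hT : 0 < T) (c : ℝ) (hc : 0 < c)
    (A : Matrix (Fin n) (Fin n) ℝ)
    (F : ℕ → Matrix (Fin n) (Fin n) ℝ)
    (Y V U : ℕ → (Fin n → ℝ))
    (hrec : ∀ t < T, Y (t + 1) = A.mulVec (Y t) + U t + V (t + 1))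
    (hfb : ∀ t < T, U t = -((F t).mulVec (Y t)))
    (hG : ((∑ t ∈ range T, vecMulVec (Y t) (Y t)) -
        (c * T) • (1 : Matrix (Fin n) (Fin n) ℝ)).PosSemidef) :
    opNorm ((∑ t ∈ range T, F t * vecMulVec (Y t) (Y t)) *
          (∑ t ∈ range T, vecMulVec (Y t) (Y t))⁻¹ - A) ^ 2
      ≤ (1 / (c * T)) * ∑ t ∈ range T, ∑ i, (Y (t + 1) i - V (t + 1) i) ^ 2 := by
  classical
  set G : Matrix (Fin n) (Fin n) ℝ := ∑ t ∈ range T, vecMulVec (Y t) (Y t) with hGdef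
  set Ev : ℕ → (Fin n → ℝ) := fun t => Y (t + 1) - V (t + 1) with hEdef
  have hcT : (0 : ℝ) < c * T := by positivity
  -- the residual identity
  have hE : ∀ t < T, Ev t = A.mulVec (Y t) - (F t).mulVec (Y t) := by
    intro t ht
    have h1 := hrec t ht
    rw [hfb t ht] at h1
    funext i
    simp only [hEdef, Pi.sub_apply, h1, Pi.add_apply, Pi.neg_apply]
    ring
  -- quadratic form facts
  have hGquad : ∀ x : Fin n → ℝ, c * T * (x ⬝ᵥ x) ≤ x ⬝ᵥ (G *ᵥ x) := by
    intro x
    have h := hG.dotProduct_mulVec_nonneg x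
    simp only [star_trivial, Matrix.sub_mulVec, dotProduct_sub,
      Matrix.smul_mulVec, Matrix.one_mulVec, dotProduct_smul, smul_eq_mul] at h
    linarith
  have hGdot : ∀ x : Fin n → ℝ, x ⬝ᵥ (G *ᵥ x) = ∑ t ∈ range T, (Y t ⬝ᵥ x) ^ 2 := by
    intro x
    rw [hGdef, aux_sum_mulVec, aux_dotProduct_sum]
    refine Finset.sum_congr rfl fun t _ => ?_
    rw [aux_vecMulVec_mulVec, dotProduct_smul, smul_eq_mul, dotProduct_comm, sq]
  -- G is positive definite, hence invertible
  have hGpd : G.PosDef := by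
    refine Matrix.PosDef.of_dotProduct_mulVec_pos ?_ fun x hx => ?_
    · have h1 : ((c * T) • (1 : Matrix (Fin n) (Fin n) ℝ)).IsHermitian := by
        simp [Matrix.IsHermitian]
      simpa using hG.1.add h1
    · have h2 := hGquad x
      have hx2 : 0 < x ⬝ᵥ x := by
        have := Matrix.dotProduct_star_self_pos_iff (v := x) |>.mpr hx
        simpa using this
      simp only [star_trivial]
      nlinarith
  have hGinv : G * G⁻¹ = 1 := Matrix.mul_nonsing_inv _ hGpd.det_pos.ne'.isUnit
  -- rewrite the estimated error
  set D : Matrix (Fin n) (Fin n) ℝ := ∑ t ∈ range T, vecMulVec (Ev t) (Y t) with hDdef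
  have hsum : (∑ t ∈ range T, F t * vecMulVec (Y t) (Y t)) = A * G - D := by
    rw [hGdef, hDdef, Finset.mul_sum, ← Finset.sum_sub_distrib]
    refine Finset.sum_congr rfl fun t ht => ?_
    rw [aux_mul_vecMulVec, aux_mul_vecMulVec, hE t (Finset.mem_range.mp ht),
      aux_vecMulVec_sub]
    abel
  have hM : (∑ t ∈ range T, F t * vecMulVec (Y t) (Y t)) * G⁻¹ - A = -(D * G⁻¹) := by
    rw [hsum, Matrix.sub_mul, mul_assoc, hGinv, mul_one]
    abel
  set S : ℝ := ∑ t ∈ range T, ∑ i, Ev t i ^ 2 with hSdef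
  have hS0 : 0 ≤ S := by
    refine Finset.sum_nonneg fun t _ => Finset.sum_nonneg fun i _ => sq_nonneg _
  -- the operator norm bound
  have key : opNorm (D * G⁻¹) ≤ Real.sqrt (S / (c * T)) := by
    unfold opNorm
    refine ContinuousLinearMap.opNorm_le_bound _ (Real.sqrt_nonneg _) fun x => ?_
    set x' : Fin n → ℝ := WithLp.equiv 2 (Fin n → ℝ) x with hx'def
    set z : Fin n → ℝ := G⁻¹ *ᵥ x' with hzdef
    -- value of the CLM on x
    have happ : (Matrix.toEuclideanCLM (𝕜 := ℝ) (D * G⁻¹)) x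
        = (WithLp.equiv 2 (Fin n → ℝ)).symm ((D * G⁻¹) *ᵥ x') := by
      rfl
    have hmv : (D * G⁻¹) *ᵥ x' = ∑ t ∈ range T, (Y t ⬝ᵥ z) • Ev t := by
      rw [← Matrix.mulVec_mulVec, ← hzdef, hDdef, aux_sum_mulVec]
      refine Finset.sum_congr rfl fun t _ => ?_
      rw [aux_vecMulVec_mulVec]
    -- the quadratic quantity
    set q : ℝ := z ⬝ᵥ (G *ᵥ z) with hqdef
    have hGz : G *ᵥ z = x' := by
      rw [hzdef, Matrix.mulVec_mulVec, hGinv, Matrix.one_mulVec]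
    have hq0 : 0 ≤ q := by
      have h1 := hGquad z
      have h2 : 0 ≤ z ⬝ᵥ z := Finset.sum_nonneg fun i _ => mul_self_nonneg _
      nlinarith
    have hxnorm : x' ⬝ᵥ x' = ‖x‖ ^ 2 := by
      rw [EuclideanSpace.norm_eq, Real.sq_sqrt (Finset.sum_nonneg fun i _ => sq_nonneg _)]
      simp only [dotProduct, Real.norm_eq_abs, sq_abs]
      exact Finset.sum_congr rfl fun i _ => by rw [hx'def]; simp [sq]
    -- bound q ≤ ‖x‖² / (cT)
    have hqbound : q ≤ ‖x‖ ^ 2 / (c * T) := by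
      have hCS : (z ⬝ᵥ x') ^ 2 ≤ (z ⬝ᵥ z) * (x' ⬝ᵥ x') := by
        simpa [dotProduct, sq] using
          sum_mul_sq_le_sq_mul_sq Finset.univ z x'
      have hqx : q = z ⬝ᵥ x' := by rw [hqdef, hGz]
      have h1 := hGquad z
      rw [← hqdef] at h1
      have h2 : 0 ≤ z ⬝ᵥ z := Finset.sum_nonneg fun i _ => mul_self_nonneg _
      rw [← hqx, hxnorm] at hCS
      rcases hq0.eq_or_lt with hq | hq
      · rw [← hq]; positivity
      · rw [le_div_iff₀ hcT]
        nlinarith [hq, hCS, h1, h2, sq_nonneg ‖x‖]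
    -- Cauchy–Schwarz on the sum of vectors, coordinatewise
    have hnormval : ‖(Matrix.toEuclideanCLM (𝕜 := ℝ) (D * G⁻¹)) x‖
        = Real.sqrt (∑ i, (∑ t ∈ range T, (Y t ⬝ᵥ z) * Ev t i) ^ 2) := by
      rw [happ, hmv, aux_euclid_norm_symm]
      congr 1
      refine Finset.sum_congr rfl fun i _ => ?_
      simp [Finset.sum_apply]
    have hCS2 : (∑ i, (∑ t ∈ range T, (Y t ⬝ᵥ z) * Ev t i) ^ 2)
        ≤ q * S := by
      have h1 : ∀ i, (∑ t ∈ range T, (Y t ⬝ᵥ z) * Ev t i) ^ 2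
          ≤ (∑ t ∈ range T, (Y t ⬝ᵥ z) ^ 2) * (∑ t ∈ range T, Ev t i ^ 2) :=
        fun i => sum_mul_sq_le_sq_mul_sq _ _ _
      calc (∑ i, (∑ t ∈ range T, (Y t ⬝ᵥ z) * Ev t i) ^ 2)
          ≤ ∑ i, (∑ t ∈ range T, (Y t ⬝ᵥ z) ^ 2) * (∑ t ∈ range T, Ev t i ^ 2) :=
            Finset.sum_le_sum fun i _ => h1 i
        _ = (∑ t ∈ range T, (Y t ⬝ᵥ z) ^ 2) * ∑ i, ∑ t ∈ range T, Ev t i ^ 2 := by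
            rw [Finset.mul_sum]
        _ = q * S := by
            rw [hqdef, hGdot z, hSdef, Finset.sum_comm]
    have hfinal : (∑ i, (∑ t ∈ range T, (Y t ⬝ᵥ z) * Ev t i) ^ 2)
        ≤ S / (c * T) * ‖x‖ ^ 2 := by
      calc (∑ i, (∑ t ∈ range T, (Y t ⬝ᵥ z) * Ev t i) ^ 2)
          ≤ q * S := hCS2
        _ ≤ (‖x‖ ^ 2 / (c * T)) * S := mul_le_mul_of_nonneg_right hqbound hS0
        _ = S / (c * T) * ‖x‖ ^ 2 := by ring
    rw [hnormval]
    calc Real.sqrt (∑ i, (∑ t ∈ range T, (Y t ⬝ᵥ z) * Ev t i) ^ 2)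
        ≤ Real.sqrt (S / (c * T) * ‖x‖ ^ 2) := Real.sqrt_le_sqrt hfinal
      _ = Real.sqrt (S / (c * T)) * ‖x‖ := by
          rw [Real.sqrt_mul (by positivity), Real.sqrt_sq (norm_nonneg x)]
  -- conclude
  have hrw : opNorm ((∑ t ∈ range T, F t * vecMulVec (Y t) (Y t)) * G⁻¹ - A)
      = opNorm (D * G⁻¹) := by rw [hM, aux_opNorm_neg]
  have hRHS : (∑ t ∈ range T, ∑ i, (Y (t + 1) i - V (t + 1) i) ^ 2) = S := by
    rw [hSdef]
    refine Finset.sum_congr rfl fun t _ => Finset.sum_congr rfl fun i _ => ?_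
    simp [hEdef]
  rw [hrw, hRHS]
  have h1 : opNorm (D * G⁻¹) ^ 2 ≤ Real.sqrt (S / (c * T)) ^ 2 := by
    have := opNorm (D * G⁻¹)
    refine pow_le_pow_left₀ ?_ key 2
    unfold opNorm; exact norm_nonneg _
  rw [Real.sq_sqrt (by positivity)] at h1
  calc opNorm (D * G⁻¹) ^ 2 ≤ S / (c * T) := h1
    _ = 1 / (c * T) * S := by ring
end
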